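/- Let q be a prime power and let e, f ≥ 2 be integers with ef = q - 1. Let α be a generator of the multiplicative group of the finite field F_q, and for 0 ≤ i ≤ e-1 let C_i = {α^t : t ≡ i (mod e)} be the cosets of the subgroup C_0 of e-th powers. Then for every nonzero x ∈ F_q, the number of pairs (c, c') with c, c' lying in the same coset C_i (for some i), c ≠ c', and x = c - c', equals f - 1. In other words, {C_0,...,C_{e-1}} is a (q, f, f-1) near-complete disjoint difference family in the additive group of F_q. -/

import Mathlib

open Finset

open scoped Classical in
/-- The coset `C i = {α^t : t ≡ i (mod e)}` of the subgroup of `e`-th powers in `F^*`. -/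
noncomputable def cyclotomicCoset {F : Type*} [Field F] [Fintype F]
    (α : Fˣ) (e i : ℕ) : Finset F :=
  Finset.univ.filter (fun x => ∃ t : ℕ, x = (α : F) ^ t ∧ t % e = i)

open scoped Classical in
/-- Multiplicity of `x` in the internal difference multiset `ΔA`. -/
noncomputable def diffCount {G : Type*} [AddCommGroup G] (A : Finset G) (x : G) : ℕ :=
  ((A ×ˢ A).filter (fun q => q.1 ≠ q.2 ∧ q.1 - q.2 = x)).card

/-- (Wilson) Let `q` be a prime power, `e, f ≥ 2` with `e * f = q - 1`, and `α` a
generator of `F_q^*`.  Then every nonzero `x ∈ F_q` has exactly `f - 1` representations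
`x = c - c'` with `c ≠ c'` lying in a common coset `C i`; i.e. the cosets `C 0, …, C (e-1)` form
a `(q, f, f-1)` near-complete disjoint difference family in `(F_q, +)`. -/
theorem stmt3 {F : Type*} [Field F] [Fintype F]
    (q e f : ℕ) (hq : Fintype.card F = q)
    (he : 2 ≤ e) (hf : 2 ≤ f) (hef : e * f = q - 1)
    (α : Fˣ) (hα : ∀ x : Fˣ, x ∈ Subgroup.zpowers α) :
    ∀ x : F, x ≠ 0 →
      ∑ i ∈ Finset.range e, diffCount (cyclotomicCoset α e i) x = f - 1 := by
  classical
  intro x hx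
  have hepos : 0 < e := lt_of_lt_of_le two_pos he
  have hfpos : 0 < f := lt_of_lt_of_le two_pos hf
  have hcardU : Nat.card Fˣ = q - 1 := by
    rw [Nat.card_eq_fintype_card, Fintype.card_units, hq]
  have hord : orderOf α = e * f := by
    rw [orderOf_eq_card_of_forall_mem_zpowers hα, hcardU, hef]
  have hordβ : orderOf (α ^ e) = f := by
    rw [orderOf_pow, hord, Nat.gcd_eq_right ⟨f, rfl⟩, Nat.mul_div_cancel_left _ hepos]
  -- powers of α with exponents congruent mod e*f are equal, hence coset index is well-defined
  have hpow_inj : ∀ t s : ℕ, (α : F) ^ t = (α : F) ^ s → t % e = s % e := by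
    intro t s h
    have h' : α ^ t = α ^ s := Units.ext (by push_cast; exact h)
    have hmod : t ≡ s [MOD e * f] := by rwa [pow_eq_pow_iff_modEq, hord] at h'
    exact Nat.ModEq.of_dvd (dvd_mul_right e f) hmod
  set C : ℕ → Finset F := cyclotomicCoset α e with hC
  set Si : ℕ → Finset (F × F) :=
    fun i => (C i ×ˢ C i).filter (fun p => p.1 ≠ p.2 ∧ p.1 - p.2 = x) with hSi
  have hmemC : ∀ i y, y ∈ C i ↔ ∃ t : ℕ, y = (α : F) ^ t ∧ t % e = i := by
    intro i y
    simp [hC, cyclotomicCoset]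
  -- the sets Si are pairwise disjoint
  have hdisj : ∀ i ∈ Finset.range e, ∀ j ∈ Finset.range e, i ≠ j →
      Disjoint (Si i) (Si j) := by
    intro i _ j _ hij
    rw [Finset.disjoint_left]
    rintro p hp hp'
    simp only [hSi, Finset.mem_filter, Finset.mem_product] at hp hp'
    obtain ⟨t, ht, ht'⟩ := (hmemC i p.1).1 hp.1.1
    obtain ⟨s, hs, hs'⟩ := (hmemC j p.1).1 hp'.1.1
    exact hij (ht' ▸ hs' ▸ hpow_inj t s (ht ▸ hs ▸ rfl))
  have hsum : ∑ i ∈ Finset.range e, diffCount (C i) x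
      = ((Finset.range e).biUnion Si).card := by
    rw [Finset.card_biUnion hdisj]
    rfl
  -- the index set T : nonidentity elements of the subgroup generated by α^e
  set T : Finset Fˣ :=
    Finset.univ.filter (fun z => z ∈ Subgroup.zpowers (α ^ e) ∧ z ≠ 1) with hT
  have hTcard : T.card = f - 1 := by
    have h1 : (Finset.univ.filter
        (fun z : Fˣ => z ∈ Subgroup.zpowers (α ^ e))).card = f := by
      rw [← Fintype.card_subtype, Fintype.card_zpowers, hordβ]
    have h2 : T = (Finset.univ.filter
        (fun z : Fˣ => z ∈ Subgroup.zpowers (α ^ e))).erase 1 := by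
      rw [hT, ← Finset.filter_ne']
      rw [Finset.filter_filter]
    have hmem1 : (1 : Fˣ) ∈ Finset.univ.filter
        (fun z : Fˣ => z ∈ Subgroup.zpowers (α ^ e)) := by
      simp [Subgroup.one_mem]
    rw [h2, Finset.card_erase_of_mem hmem1, h1]
  -- the bijection  z ↦ (z*y, y)  with  y = x / (z - 1)
  rw [hsum, ← hTcard]
  symm
  refine Finset.card_bij
      (fun (z : Fˣ) (_ : z ∈ T) => (((z : F) * (x / ((z : F) - 1)), x / ((z : F) - 1)) : F × F))
      ?_ ?_ ?_
  · -- maps into the biUnion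
    intro z hz
    simp only [hT, Finset.mem_filter, Finset.mem_univ, true_and] at hz
    obtain ⟨hzmem, hzne⟩ := hz
    have hz1 : (z : F) ≠ 1 := fun h => hzne (Units.ext (by push_cast; exact h))
    have hz1' : (z : F) - 1 ≠ 0 := sub_ne_zero.2 hz1
    set y : F := x / ((z : F) - 1) with hy
    have hyne : y ≠ 0 := div_ne_zero hx hz1'
    -- y = α^s
    obtain ⟨s, hs⟩ := mem_powers_iff_mem_zpowers.2 (hα (Units.mk0 y hyne))
    have hsy : y = (α : F) ^ s := by
      have := congrArg (Units.val) hs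
      push_cast at this
      exact this.symm
    -- z = (α^e)^k
    obtain ⟨k, hk⟩ := mem_powers_iff_mem_zpowers.2 hzmem
    have hzy : (z : F) * y = (α : F) ^ (e * k + s) := by
      have := congrArg (Units.val) hk
      push_cast at this
      rw [hsy, ← this, pow_add, pow_mul]
    refine Finset.mem_biUnion.2 ⟨s % e, Finset.mem_range.2 (Nat.mod_lt _ hepos), ?_⟩
    simp only [hSi, Finset.mem_filter, Finset.mem_product]
    refine ⟨⟨(hmemC _ _).2 ⟨e * k + s, hzy, Nat.mul_add_mod e k s⟩,
        (hmemC _ _).2 ⟨s, hsy, rfl⟩⟩, ?_, ?_⟩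
    · intro h
      have : ((z : F) - 1) * y = 0 := by ring_nf; rw [mul_comm] at h ⊢; linear_combination h
      rcases mul_eq_zero.1 this with h' | h'
      · exact hz1' h'
      · exact hyne h'
    · field_simp
      have h3 : y * ((z : F) - 1) = x := by rw [hy]; exact div_mul_cancel₀ x hz1'
      linear_combination h3
  · -- injective
    intro z₁ hz₁ z₂ hz₂ h
    simp only [hT, Finset.mem_filter, Finset.mem_univ, true_and] at hz₁ hz₂
    have h2 : x / ((z₁ : F) - 1) = x / ((z₂ : F) - 1) := congrArg Prod.snd h
    have h1 : (z₁ : F) * (x / ((z₁ : F) - 1)) = (z₂ : F) * (x / ((z₂ : F) - 1)) :=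
      congrArg Prod.fst h
    have hy1 : x / ((z₁ : F) - 1) ≠ 0 :=
      div_ne_zero hx (sub_ne_zero.2 fun h => hz₁.2 (Units.ext (by push_cast; exact h)))
    rw [h2] at h1
    exact Units.ext (mul_right_cancel₀ (h2 ▸ hy1) h1)
  · -- surjective
    intro p hp
    obtain ⟨i, hi, hpmem⟩ := Finset.mem_biUnion.1 hp
    simp only [hSi, Finset.mem_filter, Finset.mem_product] at hpmem
    obtain ⟨⟨hp1, hp2⟩, hpne, hpdiff⟩ := hpmem
    obtain ⟨t, ht, ht'⟩ := (hmemC i p.1).1 hp1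
    obtain ⟨s, hs, hs'⟩ := (hmemC i p.2).1 hp2
    -- the candidate unit z = α^t / α^s
    have h1 : t % e = s % e := ht'.trans hs'.symm
    have hef1 : 1 ≤ e * f := le_trans (by norm_num) (Nat.mul_le_mul he hf)
    have hkey : s * (e * f - 1) + s = s * (e * f) := by
      have h' : e * f - 1 + 1 = e * f := Nat.sub_add_cancel hef1
      calc s * (e * f - 1) + s = s * (e * f - 1 + 1) := by ring
        _ = s * (e * f) := by rw [h']
    have hdvd : e ∣ t + s * (e * f - 1) := by
      have h2 : (t + s * (e * f - 1)) ≡ (s + s * (e * f - 1)) [MOD e] :=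
        Nat.ModEq.add_right _ h1
      have h3 : (s + s * (e * f - 1)) % e = 0 := by
        rw [add_comm, hkey]
        have : s * (e * f) = e * (f * s) := by ring
        rw [this, Nat.mul_mod_right]
      have h2' : (t + s * (e * f - 1)) % e = (s + s * (e * f - 1)) % e := h2
      exact Nat.dvd_of_mod_eq_zero (h2'.trans h3)
    obtain ⟨m, hm⟩ := hdvd
    have hone : α ^ (e * f) = 1 := by rw [← hord]; exact pow_orderOf_eq_one α
    have hinv : α ^ (s * (e * f - 1)) = (α ^ s)⁻¹ := by
      apply eq_inv_of_mul_eq_one_left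
      rw [← pow_add, hkey, mul_comm s, pow_mul, hone, one_pow]
    have hzpow : (α ^ e) ^ m = α ^ t * (α ^ s)⁻¹ := by
      rw [← pow_mul, ← hm, pow_add, hinv]
    refine ⟨α ^ t * (α ^ s)⁻¹, ?_, ?_⟩
    · simp only [hT, Finset.mem_filter, Finset.mem_univ, true_and]
      refine ⟨Subgroup.mem_zpowers_iff.2 ⟨(m : ℤ), by rw [zpow_natCast]; exact hzpow⟩, ?_⟩
      intro h
      apply hpne
      have h5 : α ^ t = α ^ s := mul_inv_eq_one.1 h
      rw [ht, hs]
      have := congrArg (Units.val) h5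
      push_cast at this
      exact this
    · -- maps to p
      have hp2ne : p.2 ≠ 0 := by
        rw [hs]
        exact pow_ne_zero _ (Units.ne_zero α)
      have hzval : ((α ^ t * (α ^ s)⁻¹ : Fˣ) : F) = p.1 / p.2 := by
        rw [ht, hs]
        push_cast
        rw [div_eq_mul_inv]
      have hzsub : ((α ^ t * (α ^ s)⁻¹ : Fˣ) : F) - 1 = x / p.2 := by
        rw [hzval, ← hpdiff]
        field_simp
      have hy : x / (((α ^ t * (α ^ s)⁻¹ : Fˣ) : F) - 1) = p.2 := by
        rw [hzsub, div_div_eq_mul_div, mul_comm, mul_div_assoc, div_self hx, mul_one]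
      have hz2 : ((α ^ t * (α ^ s)⁻¹ : Fˣ) : F) * p.2 = p.1 := by
        rw [hzval, div_mul_cancel₀ _ hp2ne]
      exact Prod.ext (by rw [hy, hz2]) (by rw [hy])
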